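/- arXiv:1310.6572 — 10 statements merged into one kernel-verified Lean document; each statement's English description precedes it below -/
import Mathlib

section
/- In the Chinese monoid of rank n, for all generators w ≤ x ≤ y ≤ z, the elements represented by zw and yx commute: (zw)(yx) = (yx)(zw). -/
open FreeMonoid

/-- The defining relations of the Chinese monoid of rank `n`. -/
def chineseRel (n : ℕ) : FreeMonoid (Fin n) → FreeMonoid (Fin n) → Prop :=
  fun u v => ∃ x y z : Fin n, x ≤ y ∧ y ≤ z ∧
    ((u = of z * of y * of x ∧ v = of z * of x * of y) ∨
     (u = of z * of x * of y ∧ v = of y * of z * of x))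

/-- In the Chinese monoid `C_n`, for generators `w ≤ x ≤ y ≤ z`, the elements
`zw` and `yx` commute: `(zw)(yx) = (yx)(zw)`. -/
theorem chinese_zw_yx_commute (n : ℕ) (w x y z : Fin n)
    (hwx : w ≤ x) (hxy : x ≤ y) (hyz : y ≤ z) :
    conGen (chineseRel n)
      ((of z * of w) * (of y * of x)) ((of y * of x) * (of z * of w)) := by
  have h1 : conGen (chineseRel n) (of z * of w * of y) (of y * of z * of w) :=
    ConGen.Rel.of _ _ ⟨w, y, z, hwx.trans hxy, hyz, Or.inr ⟨rfl, rfl⟩⟩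
  have h2 : conGen (chineseRel n) (of z * of w * of x) (of x * of z * of w) :=
    ConGen.Rel.of _ _ ⟨w, x, z, hwx, hxy.trans hyz, Or.inr ⟨rfl, rfl⟩⟩
  have s1 := (conGen (chineseRel n)).mul h1 ((conGen (chineseRel n)).refl (of x))
  have s2 := (conGen (chineseRel n)).mul ((conGen (chineseRel n)).refl (of y)) h2
  refine (conGen (chineseRel n)).trans ?_ ((conGen (chineseRel n)).trans s2 ?_)
  · simpa [mul_assoc] using s1
  · simp only [mul_assoc]
    exact (conGen (chineseRel n)).refl _
end

section
/- For any word w over the alphabet {1, ..., n}, the binary search tree insertion map satisfies T(LRP(T(w))) = T(w), i.e., the left-to-right postfix reading of the binary search tree of w has the same binary search tree as w. -/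
/-- Labelled rooted binary trees. -/
inductive BinTree (α : Type*) where
  | leaf : BinTree α
  | node : BinTree α → α → BinTree α → BinTree α

namespace BinTree

/-- Insertion into a right strict binary search tree. -/
def insert {α : Type*} [LinearOrder α] (a : α) : BinTree α → BinTree α
  | leaf => node leaf a leaf
  | node l x r => if a ≤ x then node (insert a l) x r else node l x (insert a r)

/-- The binary search tree of a word: insert the letters from right to left. -/
def treeOf {α : Type*} [LinearOrder α] (w : List α) : BinTree α :=
  w.foldr insert leaf

/-- Left-to-right postfix reading of a binary tree: left subtree, right subtree, root. -/
def lrp {α : Type*} : BinTree α → List α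
  | leaf => []
  | node l a r => lrp l ++ lrp r ++ [a]

/-- The right strict binary search tree property: every label in the left subtree of a
node is `≤` its label, and every label in the right subtree is `>` its label. -/
def IsBST {α : Type*} [LinearOrder α] : BinTree α → Prop
  | leaf => True
  | node l a r => (∀ x ∈ lrp l, x ≤ a) ∧ (∀ x ∈ lrp r, a < x) ∧ IsBST l ∧ IsBST r

end BinTree

/-- A word contains a sylvester left-hand side `c a v b` with `a ≤ b < c`. -/
def HasSylvFactor {α : Type*} [LinearOrder α] (w : List α) : Prop :=
  ∃ (p v s : List α) (a b c : α), a ≤ b ∧ b < c ∧ w = p ++ c :: a :: (v ++ b :: s)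

/-- One step of sylvester rewriting: `c a v b → a c v b` for `a ≤ b < c`. -/
def SylvStep {α : Type*} [LinearOrder α] (u v : List α) : Prop :=
  ∃ (p m s : List α) (a b c : α), a ≤ b ∧ b < c ∧
    u = p ++ c :: a :: (m ++ b :: s) ∧ v = p ++ a :: c :: (m ++ b :: s)


namespace BinTree

variable {α : Type*} [LinearOrder α]

lemma mem_lrp_insert (a : α) (t : BinTree α) (x : α) :
    x ∈ lrp (insert a t) ↔ x = a ∨ x ∈ lrp t := by
  induction t with
  | leaf => simp [insert, lrp]
  | node l b r ihl ihr =>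
    by_cases h : a ≤ b <;> simp [insert, lrp, h, ihl, ihr] <;> tauto

lemma isBST_insert (a : α) (t : BinTree α) (h : IsBST t) : IsBST (insert a t) := by
  induction t with
  | leaf => simp [insert, IsBST, lrp]
  | node l b r ihl ihr =>
    obtain ⟨h1, h2, h3, h4⟩ := h
    by_cases hab : a ≤ b
    · rw [insert, if_pos hab]
      refine ⟨?_, h2, ihl h3, h4⟩
      intro x hx
      rcases (mem_lrp_insert a l x).1 hx with rfl | hx
      · exact hab
      · exact h1 x hx
    · rw [insert, if_neg hab]
      refine ⟨h1, ?_, h3, ihr h4⟩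
      intro x hx
      rcases (mem_lrp_insert a r x).1 hx with rfl | hx
      · exact lt_of_not_ge hab
      · exact h2 x hx

lemma isBST_treeOf (w : List α) : IsBST (treeOf w) := by
  induction w with
  | nil => trivial
  | cons a w ih => exact isBST_insert a _ ih

lemma foldr_insert_high (u : List α) (l r : BinTree α) (a : α)
    (h : ∀ x ∈ u, a < x) :
    u.foldr insert (node l a r) = node l a (u.foldr insert r) := by
  induction u with
  | nil => rfl
  | cons x u ih =>
    have hx : a < x := h x (by simp)
    simp only [List.foldr_cons, ih (fun y hy => h y (by simp [hy])), insert,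
      not_le.2 hx, if_false]

lemma foldr_insert_low (u : List α) (l r : BinTree α) (a : α)
    (h : ∀ x ∈ u, x ≤ a) :
    u.foldr insert (node l a r) = node (u.foldr insert l) a r := by
  induction u with
  | nil => rfl
  | cons x u ih =>
    have hx : x ≤ a := h x (by simp)
    simp only [List.foldr_cons, ih (fun y hy => h y (by simp [hy])), insert,
      hx, if_true]

lemma treeOf_lrp_of_isBST (t : BinTree α) (h : IsBST t) : treeOf (lrp t) = t := by
  induction t with
  | leaf => rfl
  | node l a r ihl ihr =>
    obtain ⟨h1, h2, h3, h4⟩ := h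
    have step1 : treeOf (lrp r ++ [a]) = node leaf a r := by
      show (lrp r ++ [a]).foldr insert leaf = _
      rw [List.foldr_append]
      show (lrp r).foldr insert (node leaf a leaf) = _
      rw [foldr_insert_high _ _ _ _ h2]
      exact congrArg _ (ihr h4)
    show treeOf (lrp l ++ lrp r ++ [a]) = _
    rw [List.append_assoc]
    show (lrp l ++ (lrp r ++ [a])).foldr insert leaf = _
    rw [List.foldr_append]
    show (lrp l).foldr insert (treeOf (lrp r ++ [a])) = _
    rw [step1, foldr_insert_low _ _ _ _ h1]
    exact congrArg (fun x => node x a r) (ihl h3)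

end BinTree

/-- The left-to-right postfix reading of the binary search tree of `w` has the same
binary search tree as `w`: `T(LRP(T(w))) = T(w)`. -/
theorem treeOf_lrp_treeOf (n : ℕ) (w : List (Fin n)) :
    BinTree.treeOf (BinTree.lrp (BinTree.treeOf w)) = BinTree.treeOf w := by
  exact BinTree.treeOf_lrp_of_isBST _ (BinTree.isBST_treeOf w)
end

section
/- Every irreducible word of the sylvester rewriting system is the left-to-right postfix reading of some binary search tree. Concretely: if w over {1,...,n} contains no factor of the form c a v b with a ≤ b < c (v an arbitrary word), then w = LRP(T(w)). -/
namespace BinTree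

theorem foldr_insert_gt {α : Type*} [LinearOrder α] (u : List α) (l r : BinTree α) (b : α)
    (h : ∀ x ∈ u, b < x) :
    u.foldr insert (node l b r) = node l b (u.foldr insert r) := by
  induction u with
  | nil => rfl
  | cons x u ih =>
    have hx : ¬ x ≤ b := not_le.mpr (h x (List.mem_cons_self))
    simp only [List.foldr_cons, ih (fun y hy => h y (List.mem_cons_of_mem _ hy))]
    simp [insert, hx]

theorem foldr_insert_le {α : Type*} [LinearOrder α] (u : List α) (l r : BinTree α) (b : α)
    (h : ∀ x ∈ u, x ≤ b) :
    u.foldr insert (node l b r) = node (u.foldr insert l) b r := by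
  induction u with
  | nil => rfl
  | cons x u ih =>
    have hx : x ≤ b := h x (List.mem_cons_self)
    simp only [List.foldr_cons, ih (fun y hy => h y (List.mem_cons_of_mem _ hy))]
    simp [insert, hx]

end BinTree

theorem hasSylv_of_factor {α : Type*} [LinearOrder α] {x : List α} (p s : List α)
    (h : HasSylvFactor x) : HasSylvFactor (p ++ x ++ s) := by
  obtain ⟨p0, v, s0, a, b, c, hab, hbc, rfl⟩ := h
  exact ⟨p ++ p0, v, s0 ++ s, a, b, c, hab, hbc, by simp⟩

theorem sylv_split {α : Type*} [LinearOrder α] (b : α) :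
    ∀ u : List α, ¬ HasSylvFactor (u ++ [b]) →
      ∃ u1 u2 : List α, u = u1 ++ u2 ∧ (∀ x ∈ u1, x ≤ b) ∧ (∀ x ∈ u2, b < x) := by
  intro u
  induction u with
  | nil => exact fun _ => ⟨[], [], by simp, by simp, by simp⟩
  | cons x t ih =>
    intro hw
    have ht : ¬ HasSylvFactor (t ++ [b]) := fun h' => hw (by
      simpa using hasSylv_of_factor [x] [] h')
    obtain ⟨u1, u2, rfl, h1, h2⟩ := ih ht
    by_cases hx : x ≤ b
    · exact ⟨x :: u1, u2, by simp, by
        intro y hy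
        rcases List.mem_cons.mp hy with rfl | hy
        · exact hx
        · exact h1 y hy, h2⟩
    · push_neg at hx
      cases u1 with
      | nil => exact ⟨[], x :: u2, by simp, by simp, by
          intro y hy
          rcases List.mem_cons.mp hy with rfl | hy
          · exact hx
          · exact h2 y hy⟩
      | cons a rest =>
        exfalso
        apply hw
        refine ⟨[], rest ++ u2, [], a, b, x, h1 a (List.mem_cons_self), hx, ?_⟩
        simp

theorem irreducible_eq_lrp_treeOf' {α : Type*} [LinearOrder α] :
    ∀ (N : ℕ) (w : List α), w.length = N → ¬ HasSylvFactor w →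
      w = BinTree.lrp (BinTree.treeOf w) := by
  intro N
  induction N using Nat.strong_induction_on with
  | _ N IH =>
  intro w hn h
  subst hn
  rcases List.eq_nil_or_concat w with rfl | ⟨u, b, rfl⟩
  · rfl
  · simp only [List.concat_eq_append] at h IH ⊢
    obtain ⟨u1, u2, rfl, h1, h2⟩ := sylv_split b u h
    have htree : BinTree.treeOf (u1 ++ u2 ++ [b]) =
        BinTree.node (BinTree.treeOf u1) b (BinTree.treeOf u2) := by
      unfold BinTree.treeOf
      rw [List.append_assoc, List.foldr_append, List.foldr_append]
      show List.foldr BinTree.insert (List.foldr BinTree.insert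
        (BinTree.node BinTree.leaf b BinTree.leaf) u2) u1 = _
      rw [BinTree.foldr_insert_gt u2 _ _ _ h2, BinTree.foldr_insert_le u1 _ _ _ h1]
    have hu1 : ¬ HasSylvFactor u1 := fun h' => h (by
      simpa using hasSylv_of_factor [] (u2 ++ [b]) h')
    have hu2 : ¬ HasSylvFactor u2 := fun h' => h (by
      simpa [List.append_assoc] using hasSylv_of_factor u1 [b] h')
    have l1 : u1.length < (u1 ++ u2 ++ [b]).length := by simp
    have l2 : u2.length < (u1 ++ u2 ++ [b]).length := by simp; omega
    rw [htree]
    show u1 ++ u2 ++ [b] = BinTree.lrp (BinTree.treeOf u1) ++ BinTree.lrp (BinTree.treeOf u2) ++ [b]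
    rw [← IH _ l1 u1 rfl hu1, ← IH _ l2 u2 rfl hu2]

/-- Every sylvester-irreducible word is the left-to-right postfix reading of its
binary search tree: if `w` contains no factor `c a v b` with `a ≤ b < c`, then
`w = LRP(T(w))`. -/
theorem irreducible_eq_lrp_treeOf (n : ℕ) (w : List (Fin n))
    (h : ¬ HasSylvFactor w) :
    w = BinTree.lrp (BinTree.treeOf w) :=
  irreducible_eq_lrp_treeOf' _ w rfl h
end

section
/- Every word of the form LRP(T) for a binary search tree T is irreducible for the sylvester rewriting system: LRP(T) contains no factor of the form c a v b with a ≤ b < c. -/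
def Good {α : Type*} [LinearOrder α] (w : List α) : Prop :=
  ∀ i j (h1 : i + 1 < j) (h2 : j < w.length),
    w[i+1]'(by omega) ≤ w[j] → w[j] < w[i]'(by omega) → False

lemma good_append {α : Type*} [LinearOrder α] (u v : List α) (x : α)
    (hu : ∀ y ∈ u, y ≤ x) (hv : ∀ y ∈ v, x < y)
    (gu : Good u) (gv : Good v) : Good (u ++ (v ++ [x])) := by
  intro i j h1 h2 hle hlt
  simp only [List.length_append, List.length_singleton] at h2
  -- helper to evaluate indices
  have geu : ∀ t (ht : t < u.length), (u ++ (v ++ [x]))[t]'(by simp; omega) = u[t] := by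
    intro t ht; rw [List.getElem_append_left ht]
  have gev : ∀ t (ht1 : u.length ≤ t) (ht2 : t < u.length + v.length),
      (u ++ (v ++ [x]))[t]'(by simp; omega) = v[t - u.length]'(by omega) := by
    intro t ht1 ht2
    rw [List.getElem_append_right (by omega), List.getElem_append_left (by omega)]
  have gex : (u ++ (v ++ [x]))[u.length + v.length]'(by simp) = x := by
    rw [List.getElem_append_right (by omega), List.getElem_append_right (by omega)]
    simp
  by_cases hj : j = u.length + v.length
  · subst hj
    rw [gex] at hle hlt
    -- w[i] > x so i ≥ u.length
    have hi : u.length ≤ i := by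
      by_contra h
      push_neg at h
      rw [geu i h] at hlt
      exact absurd (hu _ (List.getElem_mem h)) (not_le.mpr hlt)
    have hi1 : i + 1 < u.length + v.length := h1
    rw [gev (i+1) (by omega) hi1] at hle
    exact absurd (hv _ (List.getElem_mem (by omega))) (not_lt.mpr hle)
  · have hj' : j < u.length + v.length := by omega
    by_cases hju : j < u.length
    · rw [geu j hju, geu (i+1) (by omega)] at hle
      rw [geu j hju, geu i (by omega)] at hlt
      exact gu i j h1 hju hle hlt
    · push_neg at hju
      rw [gev j hju hj'] at hle hlt
      have hxj : x < v[j - u.length]'(by omega) := hv _ (List.getElem_mem (by omega))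
      have hi : u.length ≤ i := by
        by_contra h
        push_neg at h
        rw [geu i h] at hlt
        exact absurd (hu _ (List.getElem_mem h)) (not_le.mpr (lt_trans hxj hlt))
      rw [gev (i+1) (by omega) (by omega)] at hle
      rw [gev i (by omega) (by omega)] at hlt
      have := gv (i - u.length) (j - u.length) (by omega) (by omega)
      have e1 : i + 1 - u.length = i - u.length + 1 := by omega
      simp only [e1] at hle
      exact this hle hlt

lemma good_lrp {α : Type*} [LinearOrder α] (T : BinTree α) (hT : BinTree.IsBST T) :
    Good (BinTree.lrp T) := by
  induction T with
  | leaf => intro i j h1 h2 _ _; simp [BinTree.lrp] at h2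
  | node l a r ihl ihr =>
    obtain ⟨h1, h2, h3, h4⟩ := hT
    have := good_append (BinTree.lrp l) (BinTree.lrp r) a h1 h2 (ihl h3) (ihr h4)
    simpa [BinTree.lrp, List.append_assoc] using this

/-- The left-to-right postfix reading of any binary search tree is irreducible for the
sylvester rewriting system: it contains no factor `c a v b` with `a ≤ b < c`. -/
theorem lrp_bst_irreducible (n : ℕ) (T : BinTree (Fin n)) (hT : BinTree.IsBST T) :
    ¬ HasSylvFactor (BinTree.lrp T) := by
  intro ⟨p, v, s, a, b, c, hab, hbc, hw⟩
  have g := good_lrp T hT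
  rw [hw] at g
  have h1 : p.length + 1 < p.length + 2 + v.length := by omega
  have h2 : p.length + 2 + v.length < (p ++ c :: a :: (v ++ b :: s)).length := by
    simp; omega
  have ec : (p ++ c :: a :: (v ++ b :: s))[p.length]'(by omega) = c := by
    rw [List.getElem_append_right (by omega)]; simp
  have ea : (p ++ c :: a :: (v ++ b :: s))[p.length + 1]'(by omega) = a := by
    rw [List.getElem_append_right (by omega)]; simp
  have eb : (p ++ c :: a :: (v ++ b :: s))[p.length + 2 + v.length]'h2 = b := by
    rw [List.getElem_append_right (by omega)]
    have : p.length + 2 + v.length - p.length = v.length + 2 := by omega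
    simp only [this]
    show (c :: a :: (v ++ b :: s))[v.length + 2] = b
    simp only [List.getElem_cons_succ]
    rw [List.getElem_append_right (by omega)]
    simp
  have key := g p.length (p.length + 2 + v.length) h1 h2
  rw [ea, eb, ec] at key
  exact key hab hbc
end

section
/- The sylvester rewriting system is complete: it is noetherian and confluent, and its irreducible words are exactly the words of the form LRP(T) for binary search trees T, equivalently the lexicographically minimal representatives of elements of the sylvester monoid S_n. -/
namespace SylvAux

variable {α : Type*} [LinearOrder α]

/-! ### A numerical measure decreasing along rewriting steps -/

/-- Base-`B` value of a list of digits. -/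
def val (B : ℕ) : List ℕ → ℕ
  | [] => 0
  | x :: t => x * B ^ t.length + val B t

lemma val_append (B : ℕ) (p u : List ℕ) :
    val B (p ++ u) = val B p * B ^ u.length + val B u := by
  induction p with
  | nil => simp [val]
  | cons x t ih => simp [val, ih, List.length_append, pow_add]; ring

/-- The measure of a word over `Fin n`. -/
def mu (n : ℕ) (w : List (Fin n)) : ℕ := val (n + 1) (w.map Fin.val)

lemma key_ineq (B e a c : ℕ) (hac : a < c) (hB : 2 ≤ B) (he : 0 < e) :
    a * (e * B) + c * e < c * (e * B) + a * e := by
  obtain ⟨d, rfl⟩ : ∃ d, c = a + d + 1 := ⟨c - a - 1, by omega⟩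
  have h2 : d * 2 ≤ d * B := Nat.mul_le_mul_left d hB
  nlinarith

lemma step_mu {n : ℕ} {u v : List (Fin n)} (h : SylvStep u v) : mu n v < mu n u := by
  obtain ⟨p, m, s, a, b, c, hab, hbc, hu, hv⟩ := h
  subst hu hv
  have hac : (a : ℕ) < c := Fin.lt_iff_val_lt_val.mp (lt_of_le_of_lt hab hbc)
  have hB : 2 ≤ n + 1 := by have := a.pos; omega
  unfold mu
  set t : List ℕ := (m ++ b :: s).map Fin.val with ht
  have he : 0 < (n + 1) ^ t.length := pow_pos (by omega) _
  have key := key_ineq (n + 1) ((n + 1) ^ t.length) a c hac hB he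
  simp only [List.map_append, List.map_cons, val_append, val, List.length_cons, pow_succ, ← ht]
  omega

lemma step_of_factor {w : List α} (h : HasSylvFactor w) : ∃ v, SylvStep w v := by
  obtain ⟨p, m, s, a, b, c, h1, h2, h3⟩ := h
  exact ⟨p ++ a :: c :: (m ++ b :: s), p, m, s, a, b, c, h1, h2, h3, rfl⟩

lemma factor_of_step {u v : List α} (h : SylvStep u v) : HasSylvFactor u := by
  obtain ⟨p, m, s, a, b, c, h1, h2, h3, _⟩ := h
  exact ⟨p, m, s, a, b, c, h1, h2, h3⟩

lemma step_lex {u v : List α} (h : SylvStep u v) : List.Lex (· < ·) v u := by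
  obtain ⟨p, m, s, a, b, c, hab, hbc, hu, hv⟩ := h
  subst hu hv
  exact List.Lex.append_left _ (List.Lex.rel (lt_of_le_of_lt hab hbc)) p

lemma rtg_eqv {β : Type*} {r : β → β → Prop} {x y : β}
    (h : Relation.ReflTransGen r x y) : Relation.EqvGen r x y := by
  induction h with
  | refl => exact Relation.EqvGen.refl x
  | tail _ hbc ih => exact Relation.EqvGen.trans _ _ _ ih (Relation.EqvGen.rel _ _ hbc)

/-- Existence of normal forms, by induction on the measure. -/
lemma exists_nf {n : ℕ} : ∀ (N : ℕ) (w : List (Fin n)), mu n w ≤ N →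
    ∃ z, Relation.ReflTransGen SylvStep w z ∧ ¬ HasSylvFactor z := by
  intro N
  induction N with
  | zero =>
    intro w hw
    by_cases h : HasSylvFactor w
    · obtain ⟨v, hv⟩ := step_of_factor h
      have := step_mu hv
      omega
    · exact ⟨w, Relation.ReflTransGen.refl, h⟩
  | succ N ih =>
    intro w hw
    by_cases h : HasSylvFactor w
    · obtain ⟨v, hv⟩ := step_of_factor h
      have hm := step_mu hv
      obtain ⟨z, hz1, hz2⟩ := ih v (by omega)
      exact ⟨z, Relation.ReflTransGen.head hv hz1, hz2⟩
    · exact ⟨w, Relation.ReflTransGen.refl, h⟩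

/-! ### Binary search tree lemmas -/

open BinTree

lemma mem_lrp_insert {a x : α} : ∀ t : BinTree α,
    x ∈ lrp (BinTree.insert a t) ↔ x = a ∨ x ∈ lrp t
  | .leaf => by simp [BinTree.insert, lrp]
  | .node l y r => by
    simp only [BinTree.insert]
    split
    · simp only [lrp, List.mem_append, List.mem_singleton, mem_lrp_insert l]
      tauto
    · simp only [lrp, List.mem_append, List.mem_singleton, mem_lrp_insert r]
      tauto

lemma isBST_insert (a : α) : ∀ t : BinTree α, IsBST t → IsBST (BinTree.insert a t)
  | .leaf => by intro _; simp [BinTree.insert, IsBST, lrp]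
  | .node l y r => by
    rintro ⟨h1, h2, h3, h4⟩
    simp only [BinTree.insert]
    split
    · rename_i hay
      refine ⟨?_, h2, isBST_insert a l h3, h4⟩
      intro x hx
      rcases (mem_lrp_insert l).1 hx with rfl | hx
      · exact hay
      · exact h1 x hx
    · rename_i hay
      refine ⟨h1, ?_, h3, isBST_insert a r h4⟩
      intro x hx
      rcases (mem_lrp_insert r).1 hx with rfl | hx
      · exact lt_of_not_ge hay
      · exact h2 x hx

lemma isBST_treeOf (w : List α) : IsBST (treeOf w) := by
  induction w with
  | nil => trivial
  | cons x t ih => exact isBST_insert x _ ih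

lemma foldr_insert_le {b : α} : ∀ (u : List α) (l r : BinTree α), (∀ x ∈ u, x ≤ b) →
    u.foldr BinTree.insert (.node l b r) = .node (u.foldr BinTree.insert l) b r
  | [], l, r, _ => rfl
  | x :: t, l, r, h => by
    simp only [List.foldr_cons,
      foldr_insert_le t l r (fun y hy => h y (List.mem_cons_of_mem _ hy))]
    simp [BinTree.insert, h x ((List.mem_cons_self (a := x) (l := t)))]

lemma foldr_insert_gt {b : α} : ∀ (u : List α) (l r : BinTree α), (∀ x ∈ u, b < x) →
    u.foldr BinTree.insert (.node l b r) = .node l b (u.foldr BinTree.insert r)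
  | [], l, r, _ => rfl
  | x :: t, l, r, h => by
    simp only [List.foldr_cons,
      foldr_insert_gt t l r (fun y hy => h y (List.mem_cons_of_mem _ hy))]
    simp [BinTree.insert, not_le.2 (h x ((List.mem_cons_self (a := x) (l := t))))]

lemma treeOf_lrp : ∀ T : BinTree α, IsBST T → treeOf (lrp T) = T
  | .leaf, _ => rfl
  | .node l a r, ⟨h1, h2, h3, h4⟩ => by
    show (lrp l ++ lrp r ++ [a]).foldr BinTree.insert .leaf = _
    rw [List.foldr_append, List.foldr_append]
    show (lrp l).foldr BinTree.insert
      ((lrp r).foldr BinTree.insert (.node .leaf a .leaf)) = _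
    rw [foldr_insert_gt (lrp r) _ _ h2, foldr_insert_le (lrp l) _ _ h1]
    rw [show (lrp r).foldr BinTree.insert .leaf = treeOf (lrp r) from rfl,
        show (lrp l).foldr BinTree.insert .leaf = treeOf (lrp l) from rfl,
        treeOf_lrp l h3, treeOf_lrp r h4]

/-! ### Irreducible words are postfix readings of binary search trees -/

lemma factor_append (x y : List α) {u : List α} (h : HasSylvFactor u) :
    HasSylvFactor (x ++ u ++ y) := by
  obtain ⟨p, v, s, a, b, c, h1, h2, h3⟩ := h
  exact ⟨x ++ p, v, s ++ y, a, b, c, h1, h2, by subst h3; simp⟩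

lemma bad_pattern : ∀ (p : List α) (pre s : List α) (a b c : α), a ≤ b → b < c →
    (∀ x ∈ p, b < x) → HasSylvFactor (pre ++ c :: (p ++ a :: (s ++ [b])))
  | [], pre, s, a, b, c, h1, h2, _ => ⟨pre, s, [], a, b, c, h1, h2, by simp⟩
  | y :: p', pre, s, a, b, c, h1, h2, h3 => by
    have := bad_pattern p' (pre ++ [c]) s a b y h1 (h3 y ((List.mem_cons_self (a := y) (l := p'))))
      (fun x hx => h3 x (List.mem_cons_of_mem _ hx))
    simpa using this

lemma irr_lrp : ∀ (N : ℕ) (w : List α), w.length ≤ N → ¬HasSylvFactor w →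
    ∃ T : BinTree α, BinTree.IsBST T ∧ w = BinTree.lrp T := by
  intro N
  induction N with
  | zero =>
    intro w hw _
    have : w = [] := List.length_eq_zero_iff.mp (Nat.le_zero.mp hw)
    exact ⟨.leaf, trivial, by simp [this, BinTree.lrp]⟩
  | succ N ih =>
    intro w hw hirr
    rcases eq_or_ne w [] with rfl | hne
    · exact ⟨.leaf, trivial, rfl⟩
    obtain ⟨u, b, rfl⟩ : ∃ u b, w = u ++ [b] :=
      ⟨w.dropLast, w.getLast hne, (List.dropLast_append_getLast hne).symm⟩
    set u₁ := u.takeWhile (fun x => decide (x ≤ b)) with hu₁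
    set u₂ := u.dropWhile (fun x => decide (x ≤ b)) with hu₂
    have hsplit : u₁ ++ u₂ = u := List.takeWhile_append_dropWhile
    have hle : ∀ x ∈ u₁, x ≤ b := fun x hx => by simpa using List.mem_takeWhile_imp hx
    have hgt : ∀ x ∈ u₂, b < x := by
      by_contra hcon
      push_neg at hcon
      obtain ⟨x, hxmem, hxb⟩ := hcon
      have hne₂ : u₂ ≠ [] := List.ne_nil_of_mem hxmem
      obtain ⟨c, rest, hcr⟩ := List.exists_cons_of_ne_nil hne₂
      have hc : b < c := by
        have h0 := List.head_dropWhile_not (fun x => decide (x ≤ b)) (l := u) (hu₂ ▸ hne₂)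
        simp only [show List.dropWhile (fun x => decide (x ≤ b)) u = c :: rest from hu₂ ▸ hcr,
          List.head_cons, decide_eq_false_iff_not, not_le] at h0
        exact h0
      have hx' : x ∈ rest := by
        rcases List.mem_cons.mp (by rw [hcr] at hxmem; exact hxmem : x ∈ c :: rest) with h | h
        · exact absurd hxb (by rw [h]; exact not_le.2 hc)
        · exact h
      set p := rest.takeWhile (fun y => decide (b < y)) with hp'
      set d := rest.dropWhile (fun y => decide (b < y)) with hd'
      have hdne : d ≠ [] := by
        intro h
        rw [hd', List.dropWhile_eq_nil_iff] at h
        exact absurd (by simpa using h x hx') (not_lt.2 hxb)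
      obtain ⟨a, s, has⟩ := List.exists_cons_of_ne_nil hdne
      have ha : a ≤ b := by
        have h0 := List.head_dropWhile_not (fun y => decide (b < y)) (l := rest) (hd' ▸ hdne)
        simp only [show List.dropWhile (fun y => decide (b < y)) rest = a :: s from hd' ▸ has,
          List.head_cons, decide_eq_false_iff_not, not_lt] at h0
        exact h0
      have hpgt : ∀ y ∈ p, b < y := fun y hy => by simpa using List.mem_takeWhile_imp hy
      have hrest : p ++ a :: s = rest := by
        rw [← has, hp', hd']; exact List.takeWhile_append_dropWhile
      refine hirr ?_
      have hw' : u ++ [b] = u₁ ++ c :: (p ++ a :: (s ++ [b])) := by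
        rw [← hsplit, hcr, ← hrest]; simp
      exact hw' ▸ bad_pattern p u₁ s a b c ha hc hpgt
    have hirr₁ : ¬HasSylvFactor u₁ := by
      intro h
      refine hirr ?_
      have := factor_append [] (u₂ ++ [b]) h
      rw [← hsplit]; simpa using this
    have hirr₂ : ¬HasSylvFactor u₂ := by
      intro h
      refine hirr ?_
      have := factor_append u₁ [b] h
      rw [← hsplit]; simpa using this
    have hlen : u₁.length + u₂.length = u.length := by
      rw [← hsplit]; simp
    have hlu : u.length ≤ N := by simpa using hw
    obtain ⟨T₁, hb₁, he₁⟩ := ih u₁ (by omega) hirr₁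
    obtain ⟨T₂, hb₂, he₂⟩ := ih u₂ (by omega) hirr₂
    refine ⟨.node T₁ b T₂,
      ⟨fun x hx => hle x (he₁ ▸ hx), fun x hx => hgt x (he₂ ▸ hx), hb₁, hb₂⟩, ?_⟩
    show _ = BinTree.lrp T₁ ++ BinTree.lrp T₂ ++ [b]
    rw [← he₁, ← he₂, ← hsplit]

end SylvAux

/-- The sylvester rewriting system is complete: noetherian and confluent, and the
irreducible words are exactly the left-to-right postfix readings of binary search
trees, equivalently the lexicographically minimal representatives of elements of the
sylvester monoid. (The two hypotheses are the results of Hivert, Novelli & Thibon: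
two words are congruent iff they have the same binary search tree, and `LRP(T(w))` is
lexicographically minimal in the congruence class of `w`.) -/
theorem sylvester_complete (n : ℕ)
    (hHNT₁ : ∀ w w' : List (Fin n),
      Relation.EqvGen SylvStep w w' ↔ BinTree.treeOf w = BinTree.treeOf w')
    (hHNT₂ : ∀ w w' : List (Fin n), Relation.EqvGen SylvStep w w' →
      BinTree.lrp (BinTree.treeOf w) = w' ∨
        List.Lex (· < ·) (BinTree.lrp (BinTree.treeOf w)) w') :
    (¬ ∃ f : ℕ → List (Fin n), ∀ i, SylvStep (f i) (f (i + 1))) ∧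
    (∀ u u' u'' : List (Fin n), Relation.ReflTransGen SylvStep u u' →
      Relation.ReflTransGen SylvStep u u'' →
      ∃ v, Relation.ReflTransGen SylvStep u' v ∧ Relation.ReflTransGen SylvStep u'' v) ∧
    (∀ w : List (Fin n),
      (¬ HasSylvFactor w ↔ ∃ T : BinTree (Fin n), BinTree.IsBST T ∧ w = BinTree.lrp T) ∧
      (¬ HasSylvFactor w ↔ ∀ w', Relation.EqvGen SylvStep w w' →
        w = w' ∨ List.Lex (· < ·) w w')) := by
  have hasymm : IsAsymm (List (Fin n)) (List.Lex (· < ·)) := inferInstance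
  -- the first equivalence, used repeatedly
  have key₁ : ∀ w : List (Fin n),
      ¬ HasSylvFactor w ↔ ∃ T : BinTree (Fin n), BinTree.IsBST T ∧ w = BinTree.lrp T := by
    intro w
    constructor
    · exact SylvAux.irr_lrp w.length w le_rfl
    · rintro ⟨T, hT, rfl⟩ hfac
      obtain ⟨v, hv⟩ := SylvAux.step_of_factor hfac
      have heq : Relation.EqvGen SylvStep (BinTree.lrp T) v := Relation.EqvGen.rel _ _ hv
      have hTeq : BinTree.treeOf (BinTree.lrp T) = T := SylvAux.treeOf_lrp T hT
      rcases hHNT₂ _ _ heq with h | h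
      · rw [hTeq] at h
        have := SylvAux.step_mu hv
        rw [h] at this
        omega
      · rw [hTeq] at h
        exact hasymm.asymm _ _ (SylvAux.step_lex hv) h
  -- irreducible words are their own normal forms
  have key₂ : ∀ w : List (Fin n), ¬ HasSylvFactor w →
      BinTree.lrp (BinTree.treeOf w) = w := by
    intro w hw
    obtain ⟨T, hT, rfl⟩ := (key₁ w).mp hw
    rw [SylvAux.treeOf_lrp T hT]
  refine ⟨?_, ?_, ?_⟩
  · -- noetherian
    rintro ⟨f, hf⟩
    have key : ∀ i, SylvAux.mu n (f i) + i ≤ SylvAux.mu n (f 0) := by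
      intro i
      induction i with
      | zero => omega
      | succ i ih =>
        have := SylvAux.step_mu (hf i)
        omega
    have := key (SylvAux.mu n (f 0) + 1)
    omega
  · -- confluent
    intro u u' u'' h' h''
    obtain ⟨z', rz', hz'⟩ := SylvAux.exists_nf (SylvAux.mu n u') u' le_rfl
    obtain ⟨z'', rz'', hz''⟩ := SylvAux.exists_nf (SylvAux.mu n u'') u'' le_rfl
    have he' : Relation.EqvGen SylvStep u z' :=
      Relation.EqvGen.trans _ _ _ (SylvAux.rtg_eqv h') (SylvAux.rtg_eqv rz')
    have he'' : Relation.EqvGen SylvStep u z'' :=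
      Relation.EqvGen.trans _ _ _ (SylvAux.rtg_eqv h'') (SylvAux.rtg_eqv rz'')
    have htree : BinTree.treeOf z' = BinTree.treeOf z'' :=
      (hHNT₁ z' z'').mp (Relation.EqvGen.trans _ _ _ (Relation.EqvGen.symm _ _ he') he'')
    have hzz : z' = z'' := by
      rw [← key₂ z' hz', ← key₂ z'' hz'', htree]
    exact ⟨z', rz', hzz ▸ rz''⟩
  · -- characterization of irreducible words
    intro w
    refine ⟨key₁ w, ?_, ?_⟩
    · intro hirr w' hw'
      have := hHNT₂ w w' hw'
      rwa [key₂ w hirr] at this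
    · intro hall hfac
      obtain ⟨v, hv⟩ := SylvAux.step_of_factor hfac
      rcases hall v (Relation.EqvGen.rel _ _ hv) with h | h
      · have := SylvAux.step_mu hv
        rw [← h] at this
        omega
      · exact hasymm.asymm _ _ (SylvAux.step_lex hv) h
end

section
/- Let w be an irreducible word for the sylvester rewriting system and let w = α^(1)···α^(k) be its decomposition into maximal strictly decreasing factors (columns). If α^(i) = α^(i+h) for some h ≥ 1, then this column has length 1. -/
/-- In the maximal-column decomposition of a sylvester-irreducible word, a repeated
column must have length 1. Here `cols` is the decomposition of `w` into maximal
columns: each column is nonempty and strictly decreasing, and maximality means that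
the last letter of each column is `≤` the first letter of the next. -/
theorem sylvester_no_repeated_columns (n : ℕ) (w : List (Fin n))
    (hirr : ¬ HasSylvFactor w) (cols : List (List (Fin n)))
    (hjoin : w = cols.flatten)
    (hne : ∀ c ∈ cols, c ≠ [])
    (hdec : ∀ c ∈ cols, List.Chain' (· > ·) c)
    (hmax : List.Chain' (fun c d => ∀ x ∈ c.getLast?, ∀ y ∈ d.head?, x ≤ y) cols)
    (i j : Fin cols.length) (hij : i < j) (heq : cols.get i = cols.get j) :
    (cols.get i).length = 1 := by
  obtain ⟨i, hi⟩ := i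
  obtain ⟨j, hj⟩ := j
  have hij' : i < j := hij
  simp only [List.get_eq_getElem] at heq ⊢
  by_contra hlen
  have hmem : cols[i] ∈ cols := List.getElem_mem hi
  obtain ⟨x, t0, hxt⟩ := List.exists_cons_of_ne_nil (hne _ hmem)
  cases t0 with
  | nil => exact hlen (by rw [hxt]; rfl)
  | cons y t =>
    have hxy : y < x := by
      have h := hdec _ hmem
      rw [hxt, List.Chain', List.isChain_cons_cons] at h
      exact h.1
    apply hirr
    have h1 : cols = cols.take i ++ cols[i] :: cols.drop (i+1) := by
      conv_lhs => rw [← List.take_append_drop i cols]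
      rw [List.drop_eq_getElem_cons hi]
    set D := cols.drop (i+1) with hD
    have hDlen : D.length = cols.length - (i+1) := by simp [hD]
    have hk : j - (i+1) < D.length := by rw [hDlen]; omega
    have hidx : j - (i+1) + 1 = j - i := by omega
    have h2 : D = D.take (j - (i+1)) ++ D[j - (i+1)] :: D.drop (j - i) := by
      conv_lhs => rw [← List.take_append_drop (j - (i+1)) D]
      rw [List.drop_eq_getElem_cons hk, hidx]
    have hidx2 : i + 1 + (j - (i+1)) = j := by omega
    have hDj : D[j - (i+1)] = cols[j] := by
      simp only [hD, List.getElem_drop, hidx2]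
    have hcj : cols[j] = x :: y :: t := heq ▸ hxt
    refine ⟨(cols.take i).flatten, t ++ (D.take (j - (i+1))).flatten ++ [x],
      t ++ (D.drop (j - i)).flatten, y, y, x, le_refl y, hxy, ?_⟩
    rw [hjoin]
    conv_lhs => rw [h1, hxt, h2, hDj, hcj]
    simp
end

section
/- Let w be an irreducible word for the sylvester rewriting system, with letters w = α_1···α_m. Let I be the set of positions i such that α_i forms by itself a maximal column (i.e., is not part of a maximal strictly decreasing factor of length ≥ 2). Then for all i, i+h ∈ I with h ≥ 1, α_i ≤ α_{i+h}. -/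
lemma factor_of_indices {α : Type*} [LinearOrder α] (w : List α) (k q : ℕ)
    (hk : k + 2 ≤ q) (hq : q < w.length)
    (hab : w.get ⟨k + 1, by omega⟩ ≤ w.get ⟨q, hq⟩)
    (hbc : w.get ⟨q, hq⟩ < w.get ⟨k, by omega⟩) : HasSylvFactor w := by
  refine ⟨w.take k, (w.drop (k + 2)).take (q - (k + 2)), w.drop (q + 1),
    w.get ⟨k + 1, by omega⟩, w.get ⟨q, hq⟩, w.get ⟨k, by omega⟩, hab, hbc, ?_⟩
  have e1 : w.drop k = w.get ⟨k, by omega⟩ :: w.get ⟨k + 1, by omega⟩ ::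
      ((w.drop (k + 2)).take (q - (k + 2)) ++ w.get ⟨q, hq⟩ :: w.drop (q + 1)) := by
    rw [List.drop_eq_getElem_cons (by omega : k < w.length)]
    rw [List.drop_eq_getElem_cons (by omega : k + 1 < w.length)]
    simp only [List.get_eq_getElem]
    congr 2
    conv_lhs => rw [← List.take_append_drop (q - (k + 2)) (w.drop (k + 2))]
    congr 1
    rw [List.drop_drop]
    have h : k + 2 + (q - (k + 2)) = q := by omega
    rw [h, List.drop_eq_getElem_cons hq]
  conv_lhs => rw [← List.take_append_drop k w, e1]

/-- Let `w` be sylvester-irreducible, and let `I` be the set of positions whose letter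
forms a maximal column by itself (its letter is `≥` the preceding letter and `≤` the
following letter, whenever these exist). Then the letters at positions of `I` are
non-decreasing. -/
theorem sylvester_singleton_columns_monotone (n : ℕ) (w : List (Fin n))
    (hirr : ¬ HasSylvFactor w)
    (I : Set ℕ)
    (hI : ∀ i, I i ↔ ∃ h : i < w.length,
      (∀ h' : 1 ≤ i, w.get ⟨i - 1, by omega⟩ ≤ w.get ⟨i, h⟩) ∧
      (∀ h' : i + 1 < w.length, w.get ⟨i, h⟩ ≤ w.get ⟨i + 1, h'⟩))
    (i j : ℕ) (hi : I i) (hj : I j) (hij : i < j) :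
    ∀ (h₁ : i < w.length) (h₂ : j < w.length), w.get ⟨i, h₁⟩ ≤ w.get ⟨j, h₂⟩ := by
  intro h₁ h₂
  by_contra hlt
  push_neg at hlt
  obtain ⟨_, hiL, hiR⟩ := (hI i).mp hi
  obtain ⟨_, hjL, hjR⟩ := (hI j).mp hj
  rcases eq_or_lt_of_le (by omega : i + 1 ≤ j) with hji | hji
  · have h1 := hiR (by omega)
    have hh : w.get ⟨i + 1, by omega⟩ = w.get ⟨j, h₂⟩ := by
      congr 1; exact Fin.mk_eq_mk.mpr (by omega)
    rw [hh] at h1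
    exact absurd h1 (not_le.mpr hlt)
  · classical
    have hQ : ∃ p, i + 1 ≤ p ∧ p ≤ j - 1 ∧
        ∃ h : p < w.length, w.get ⟨p, h⟩ ≤ w.get ⟨j, h₂⟩ := by
      by_contra hc
      push_neg at hc
      have hjm := hjL (by omega)
      exact absurd hjm (not_le.mpr (hc (j - 1) (by omega) le_rfl (by omega)))
    set p := Nat.find hQ with hpdef
    obtain ⟨hp1, hp2, hp3, hp4⟩ := Nat.find_spec hQ
    have hpi2 : i + 2 ≤ p := by
      rcases eq_or_lt_of_le hp1 with h | h
      · exfalso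
        have hh : w.get ⟨p, hp3⟩ = w.get ⟨i + 1, by omega⟩ := by
          congr 1; exact Fin.mk_eq_mk.mpr (by omega)
        rw [hh] at hp4
        exact absurd (le_trans (hiR (by omega)) hp4) (not_le.mpr hlt)
      · omega
    have hnot := Nat.find_min hQ (show p - 1 < p by omega)
    have hcb : w.get ⟨j, h₂⟩ < w.get ⟨p - 1, by omega⟩ := by
      by_contra hle
      push_neg at hle
      exact hnot ⟨by omega, by omega, ⟨by omega, hle⟩⟩
    refine hirr (factor_of_indices w (p - 1) j (by omega) h₂ ?_ hcb)
    have hh : w.get ⟨p - 1 + 1, by omega⟩ = w.get ⟨p, hp3⟩ := by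
      congr 1; exact Fin.mk_eq_mk.mpr (by omega)
    rw [hh]; exact hp4
end

section
/- Let w be an irreducible word for the sylvester rewriting system, γ ∈ A, and let x be the word obtained by concatenating, in order: all letters of w that are ≤ γ (in their original order), then all letters of w that are > γ (in their original order), then γ. Then wγ rewrites to x using only rules cavb → acvb with b = γ, and x is irreducible. -/
/-- One step of sylvester rewriting in which the letter playing the role of `b`
is the distinguished final letter `γ`. -/
def SylvStepAt {α : Type*} [LinearOrder α] (γ : α) (u v : List α) : Prop :=
  ∃ (p m s : List α) (a c : α), a ≤ γ ∧ γ < c ∧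
    u = p ++ c :: a :: (m ++ γ :: s) ∧ v = p ++ a :: c :: (m ++ γ :: s)

set_option linter.unusedSectionVars false

section SylvAux

variable {α : Type*} [LinearOrder α]

def SylvIrr (w : List α) : Prop :=
  ∀ (p : List α) (c a : α) (r : List α), w = p ++ c :: a :: r → ∀ b ∈ r, b < a ∨ c ≤ b

lemma sylvIrr_iff {w : List α} : SylvIrr w ↔ ¬ HasSylvFactor w := by
  constructor
  · rintro h ⟨p, v, s, a, b, c, hab, hbc, hw⟩
    rcases h p c a (v ++ b :: s) hw b (by simp) with h' | h'
    · exact absurd hab (not_le.mpr h')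
    · exact absurd hbc (not_lt.mpr h')
  · intro h p c a r hw b hb
    by_contra hcon
    push_neg at hcon
    obtain ⟨v, s, rfl⟩ := List.append_of_mem hb
    exact h ⟨p, v, s, a, b, c, hcon.1, hcon.2, hw⟩

lemma filter_split (P : α → Bool) :
    ∀ (l p : List α) (c : α) (r : List α), l.filter P = p ++ c :: r →
      ∃ l₁ l₂, l = l₁ ++ c :: l₂ ∧ l₁.filter P = p ∧ l₂.filter P = r := by
  intro l
  induction l with
  | nil => intro p c r h; simp at h
  | cons x t ih =>
    intro p c r h
    by_cases hx : P x
    · rw [List.filter_cons_of_pos hx] at h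
      cases p with
      | nil =>
        simp only [List.nil_append, List.cons.injEq] at h
        exact ⟨[], t, by rw [h.1]; rfl, rfl, h.2⟩
      | cons y p' =>
        simp only [List.cons_append, List.cons.injEq] at h
        obtain ⟨l₁, l₂, rfl, h1, h2⟩ := ih p' c r h.2
        exact ⟨x :: l₁, l₂, rfl, by rw [List.filter_cons_of_pos hx, h1, h.1], h2⟩
    · rw [List.filter_cons_of_neg hx] at h
      obtain ⟨l₁, l₂, rfl, h1, h2⟩ := ih p c r h
      exact ⟨x :: l₁, l₂, rfl, by rw [List.filter_cons_of_neg hx, h1], h2⟩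

lemma split3 {X Y p r : List α} {c a : α} (h : X ++ Y = p ++ c :: a :: r) :
    (∃ r', X = p ++ c :: a :: r' ∧ r = r' ++ Y) ∨
    (X = p ++ [c] ∧ Y = a :: r) ∨
    (∃ p', p = X ++ p' ∧ Y = p' ++ c :: a :: r) := by
  rcases List.append_eq_append_iff.mp h with ⟨a', h1, h2⟩ | ⟨t, h1, h2⟩
  · exact Or.inr (Or.inr ⟨a', h1, h2⟩)
  · match t, h1, h2 with
    | [], h1, h2 => exact Or.inr (Or.inr ⟨[], by simp [h1], by simpa using h2.symm⟩)
    | [c'], h1, h2 =>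
      simp only [List.cons_append, List.nil_append, List.cons.injEq] at h2
      exact Or.inr (Or.inl ⟨by rw [h1, h2.1], h2.2.symm⟩)
    | c' :: a' :: t', h1, h2 =>
      simp only [List.cons_append, List.cons.injEq] at h2
      exact Or.inl ⟨t', by rw [h1, h2.1, h2.2.1], h2.2.2⟩

lemma subA {w : List α} {γ : α} (hw : SylvIrr w) {p r : List α} {c a b : α}
    (hL : w.filter (fun x => decide (x ≤ γ)) = p ++ c :: a :: r)
    (hb : b ∈ r) (hab : a ≤ b) (hbc : b < c) (hcγ : c ≤ γ) : False := by
  obtain ⟨l₁, l₂, hw1, h1, h2⟩ := filter_split _ w p c (a :: r) hL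
  obtain ⟨u, l₃, hl₂, hu, h3⟩ := filter_split _ l₂ [] a r h2
  have hb3 : b ∈ l₃ := List.mem_of_mem_filter (h3 ▸ hb)
  rcases u.eq_nil_or_concat with rfl | ⟨u', e, rfl⟩
  · rcases hw l₁ c a l₃ (by rw [hw1, hl₂]; simp) b hb3 with h | h
    · exact absurd hab (not_le.mpr h)
    · exact absurd hbc (not_lt.mpr h)
  · rw [List.concat_eq_append] at hl₂ hu
    have he : γ < e := by
      by_contra hle
      push_neg at hle
      have : e ∈ (u' ++ [e]).filter (fun x => decide (x ≤ γ)) :=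
        List.mem_filter.mpr ⟨by simp, by simpa⟩
      rw [hu] at this; simp at this
    rcases hw (l₁ ++ c :: u') e a l₃ (by rw [hw1, hl₂]; simp) b hb3 with h | h
    · exact absurd hab (not_le.mpr h)
    · exact absurd (lt_of_le_of_lt (hbc.le.trans hcγ) he) (not_lt.mpr h)

lemma subB {w : List α} {γ : α} (hw : SylvIrr w) {p r : List α} {c a b : α}
    (hG : w.filter (fun x => decide (γ < x)) = p ++ c :: a :: r)
    (hb : b ∈ r) (hab : a ≤ b) (hbc : b < c) (haγ : γ < a) : False := by
  obtain ⟨l₁, l₂, hw1, h1, h2⟩ := filter_split _ w p c (a :: r) hG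
  obtain ⟨u, l₃, hl₂, hu, h3⟩ := filter_split _ l₂ [] a r h2
  have hb3 : b ∈ l₃ := List.mem_of_mem_filter (h3 ▸ hb)
  cases u with
  | nil =>
    rcases hw l₁ c a l₃ (by rw [hw1, hl₂]; simp) b hb3 with h | h
    · exact absurd hab (not_le.mpr h)
    · exact absurd hbc (not_lt.mpr h)
  | cons f u' =>
    have hf : f ≤ γ := by
      by_contra hle
      push_neg at hle
      have : f ∈ (f :: u').filter (fun x => decide (γ < x)) :=
        List.mem_filter.mpr ⟨by simp, by simpa⟩
      rw [hu] at this; simp at this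
    rcases hw l₁ c f (u' ++ a :: l₃) (by rw [hw1, hl₂]; simp) b (by simp [hb3]) with h | h
    · exact absurd h (asymm (hf.trans_lt (haγ.trans_le hab)))
    · exact absurd hbc (not_lt.mpr h)

lemma irr_result {w : List α} {γ : α} (hw : SylvIrr w) :
    SylvIrr (w.filter (fun x => decide (x ≤ γ)) ++ w.filter (fun x => decide (γ < x)) ++ [γ]) := by
  intro p c a r hx b hb
  by_contra hcon
  push_neg at hcon
  obtain ⟨hab, hbc⟩ := hcon
  set L := w.filter (fun x => decide (x ≤ γ)) with hLdef
  set G := w.filter (fun x => decide (γ < x)) with hGdef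
  clear_value L G
  have hx' : L ++ (G ++ [γ]) = p ++ c :: a :: r := by rw [← List.append_assoc]; exact hx
  have memL : ∀ y ∈ L, y ≤ γ := fun y hy => by
    rw [hLdef] at hy; simpa using (List.mem_filter.mp hy).2
  have memG : ∀ y ∈ G, γ < y := fun y hy => by
    rw [hGdef] at hy; simpa using (List.mem_filter.mp hy).2
  rcases split3 hx' with ⟨r', hL, hr⟩ | ⟨hL, hY⟩ | ⟨p', hp, hY⟩
  · -- c :: a within L
    have hcγ : c ≤ γ := memL c (by rw [hL]; simp)
    have hbr' : b ∈ r' := by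
      subst hr
      rcases List.mem_append.mp hb with h | h
      · exact h
      rcases List.mem_append.mp h with h | h
      · exact absurd (memG b h) (not_lt.mpr (hbc.le.trans hcγ))
      · simp at h; subst h; exact absurd hbc (not_lt.mpr hcγ)
    exact subA hw (by rw [← hLdef]; exact hL) hbr' hab hbc hcγ
  · -- c last of L, a first of G ++ [γ]
    have hcγ : c ≤ γ := memL c (by rw [hL]; simp)
    cases G with
    | nil =>
      simp only [List.nil_append, List.cons.injEq] at hY
      rw [← hY.2] at hb; simp at hb
    | cons g G' =>
      simp only [List.cons_append, List.cons.injEq] at hY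
      have : γ < a := hY.1 ▸ memG g (by simp)
      exact absurd ((hab.trans_lt hbc).trans_le hcγ) (not_lt.mpr this.le)
  · -- within G ++ [γ]
    rcases split3 hY with ⟨r'', hG, hr⟩ | ⟨hG, hY'⟩ | ⟨p'', hp', hY'⟩
    · have haγ : γ < a := memG a (by rw [hG]; simp)
      have hbr'' : b ∈ r'' := by
        subst hr
        rcases List.mem_append.mp hb with h | h
        · exact h
        · simp at h; subst h; exact absurd haγ (not_lt.mpr hab)
      exact subB hw (by rw [← hGdef]; exact hG) hbr'' hab hbc haγ
    · simp only [List.cons.injEq] at hY'  -- [γ] = a :: r → wrong orientation?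
      rw [← hY'.2] at hb; simp at hb
    · have := congrArg List.length hY'
      simp at this; omega

end SylvAux

section SylvRw
variable {α : Type*} [LinearOrder α]

lemma step_prepend {γ : α} {u v : List α} (q : List α) (h : SylvStepAt γ u v) :
    SylvStepAt γ (q ++ u) (q ++ v) := by
  obtain ⟨p, m, s, a, c, h1, h2, rfl, rfl⟩ := h
  exact ⟨q ++ p, m, s, a, c, h1, h2, by simp, by simp⟩

lemma rtg_prepend {γ : α} {u v : List α} (q : List α)
    (h : Relation.ReflTransGen (SylvStepAt γ) u v) :
    Relation.ReflTransGen (SylvStepAt γ) (q ++ u) (q ++ v) :=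
  Relation.ReflTransGen.lift (q ++ ·) (fun _ _ hs => step_prepend q hs) _ _ h

lemma sylv_bubble {γ c : α} (hc : γ < c) :
    ∀ (l m s : List α), (∀ x ∈ l, x ≤ γ) →
      Relation.ReflTransGen (SylvStepAt γ) (c :: (l ++ m ++ γ :: s)) (l ++ c :: (m ++ γ :: s)) := by
  intro l
  induction l with
  | nil => intro m s _; exact Relation.ReflTransGen.refl
  | cons x t ih =>
    intro m s hx
    have step1 : SylvStepAt γ (c :: (x :: t ++ m ++ γ :: s)) (x :: c :: (t ++ m ++ γ :: s)) :=
      ⟨[], t ++ m, s, x, c, hx x (by simp), hc, by simp, by simp⟩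
    exact Relation.ReflTransGen.head step1
      (rtg_prepend [x] (ih m s (fun y hy => hx y (by simp [hy]))))

lemma sylv_rewrite (γ : α) (w : List α) :
    Relation.ReflTransGen (SylvStepAt γ) (w ++ [γ])
      (w.filter (fun x => decide (x ≤ γ)) ++ w.filter (fun x => decide (γ < x)) ++ [γ]) := by
  induction w with
  | nil => exact Relation.ReflTransGen.refl
  | cons x t ih =>
    have h1 := rtg_prepend [x] ih
    by_cases hx : x ≤ γ
    · rw [List.filter_cons_of_pos (by simpa using hx),
        List.filter_cons_of_neg (by simpa using not_lt.mpr hx)]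
      simpa using h1
    · push_neg at hx
      rw [List.filter_cons_of_neg (by simpa using not_le.mpr hx),
        List.filter_cons_of_pos (by simpa using hx)]
      refine Relation.ReflTransGen.trans (show Relation.ReflTransGen (SylvStepAt γ)
        ((x :: t) ++ [γ]) (x :: (t.filter (fun y => decide (y ≤ γ)) ++
          t.filter (fun y => decide (γ < y)) ++ γ :: [])) by simpa using h1) ?_
      have := sylv_bubble hx (t.filter (fun y => decide (y ≤ γ)))
        (t.filter (fun y => decide (γ < y))) []
        (fun y hy => by simpa using (List.mem_filter.mp hy).2)
      simpa using this

end SylvRw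


/-- If `w` is sylvester-irreducible and `γ` a letter, then `wγ` rewrites, using only
rules `c a v b → a c v b` with `b = γ`, to the irreducible word `x` obtained by
concatenating the letters of `w` that are `≤ γ`, then those `> γ`, then `γ`. -/
theorem sylvester_right_multiplication (n : ℕ) (w : List (Fin n)) (γ : Fin n)
    (hirr : ¬ HasSylvFactor w) :
    Relation.ReflTransGen (SylvStepAt γ) (w ++ [γ])
        (w.filter (· ≤ γ) ++ w.filter (fun a => γ < a) ++ [γ]) ∧
      ¬ HasSylvFactor (w.filter (· ≤ γ) ++ w.filter (fun a => γ < a) ++ [γ]) :=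
  ⟨sylv_rewrite γ w, sylvIrr_iff.mp (irr_result (sylvIrr_iff.mpr hirr))⟩
end

section
/- Let w be an irreducible word for the sylvester rewriting system and γ ∈ A. Every word reachable from γw by sylvester rewriting has the form u γ v with w = uv and γ strictly greater than every letter of u; moreover, if any rule cavb → acvb applies to uγv, then c is the distinguished occurrence of γ, a is the first letter of v, and b is a later letter of v. -/
private lemma hasSylv_cons {α : Type*} [LinearOrder α] {t : List α} (d : α) :
    HasSylvFactor t → HasSylvFactor (d :: t) := by
  rintro ⟨p, v, s, a, b, c, h1, h2, rfl⟩
  exact ⟨d :: p, v, s, a, b, c, h1, h2, rfl⟩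

private lemma key {α : Type*} [LinearOrder α] (γ : α) :
    ∀ (p u v m s : List α) (a b c : α),
      ¬ HasSylvFactor (u ++ v) → (∀ x ∈ u, x < γ) → a ≤ b → b < c →
      u ++ γ :: v = p ++ c :: a :: (m ++ b :: s) →
      p = u ∧ c = γ ∧ v = a :: (m ++ b :: s) := by
  intro p
  induction p with
  | nil =>
    intro u v m s a b c hirr hu hab hbc heq
    rcases u with _ | ⟨d, (_ | ⟨e, u''⟩)⟩
    · simp at heq
      obtain ⟨h1, h2⟩ := heq
      exact ⟨rfl, h1.symm, h2⟩
    · simp at heq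
      obtain ⟨h1, h2, h3⟩ := heq
      have hd : d < γ := hu d (by simp)
      subst h1; subst h2
      exact absurd (lt_trans (lt_of_le_of_lt hab hbc) hd) (lt_irrefl _)
    · 
      simp only [List.nil_append, List.cons_append, List.cons.injEq] at heq
      obtain ⟨h1, h2, h3⟩ := heq
      subst h1; subst h2
      have hcγ : d < γ := hu d (by simp)
      exfalso
      rcases List.append_eq_append_iff.mp h3 with ⟨t, hm, ht⟩ | ⟨t, hu'', ht⟩
      · rcases t with _ | ⟨g, t'⟩
        · simp only [List.nil_append, List.cons.injEq] at ht
          exact absurd (lt_trans hbc hcγ) (not_lt.mpr (le_of_eq ht.1))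
        · simp only [List.cons_append, List.cons.injEq] at ht
          obtain ⟨hg, hv⟩ := ht
          subst hg
          refine hirr ⟨[], u'' ++ t', s, e, b, d, hab, hbc, ?_⟩
          subst hm; subst hv; simp
      · rcases t with _ | ⟨g, t'⟩
        · simp only [List.nil_append, List.cons.injEq] at ht
          exact absurd (lt_trans hbc hcγ) (not_lt.mpr (le_of_eq ht.1.symm))
        · simp only [List.cons_append, List.cons.injEq] at ht
          obtain ⟨hg, hs⟩ := ht
          subst hg
          refine hirr ⟨[], m, t' ++ v, e, b, d, hab, hbc, ?_⟩
          subst hu''; simp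
  | cons q p' ih =>
    intro u v m s a b c hirr hu hab hbc heq
    rcases u with _ | ⟨d, u'⟩
    · simp only [List.nil_append, List.cons_append, List.cons.injEq] at heq
      obtain ⟨h1, h2⟩ := heq
      exact absurd (⟨p', m, s, a, b, c, hab, hbc, by simpa using h2⟩ :
        HasSylvFactor ([] ++ v)) hirr
    · simp only [List.cons_append, List.cons.injEq] at heq
      obtain ⟨h1, h2⟩ := heq
      subst h1
      have hirr' : ¬ HasSylvFactor (u' ++ v) := fun h =>
        hirr (by simpa using hasSylv_cons d h)
      obtain ⟨hp, hc, hv⟩ := ih u' v m s a b c hirr' (fun x hx => hu x (by simp [hx])) hab hbc h2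
      exact ⟨by rw [hp], hc, hv⟩

/-- Every word reachable from `γw` (with `w` sylvester-irreducible) by sylvester
rewriting has the form `u γ v` with `w = uv` and `γ` greater than every letter of `u`;
moreover any applicable rule `c a v' b → a c v' b` has `c` equal to the distinguished
occurrence of `γ`, `a` the first letter of `v`, and `b` a later letter of `v`. -/
theorem sylvester_left_multiplication (n : ℕ) (w : List (Fin n)) (γ : Fin n)
    (hirr : ¬ HasSylvFactor w) (x : List (Fin n))
    (hx : Relation.ReflTransGen SylvStep (γ :: w) x) :
    ∃ u v : List (Fin n), x = u ++ γ :: v ∧ w = u ++ v ∧ (∀ a ∈ u, a < γ) ∧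
      ∀ (p m s : List (Fin n)) (a b c : Fin n), a ≤ b → b < c →
        x = p ++ c :: a :: (m ++ b :: s) →
        p = u ∧ c = γ ∧ v = a :: (m ++ b :: s) := by

  induction hx with
  | refl =>
    refine ⟨[], w, rfl, rfl, by simp, ?_⟩
    intro p m s a b c hab hbc heq
    exact key γ p [] w m s a b c (by simpa using hirr) (by simp) hab hbc heq
  | tail hy step ih =>
    obtain ⟨u, v, hxy, hw, hlt, hcl⟩ := ih
    obtain ⟨p, m, s, a, b, c, hab, hbc, hy1, hy2⟩ := step
    obtain ⟨hpu, hcγ, hv⟩ := hcl p m s a b c hab hbc (hxy ▸ hy1)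
    have haγ : a < γ := hcγ ▸ lt_of_le_of_lt hab hbc
    have hlt' : ∀ z ∈ u ++ [a], z < γ := by
      intro z hz
      rcases List.mem_append.mp hz with h | h
      · exact hlt z h
      · simp at h; subst h; exact haγ
    have hw' : w = (u ++ [a]) ++ (m ++ b :: s) := by rw [hw, hv]; simp
    refine ⟨u ++ [a], m ++ b :: s, by rw [hy2, hpu, hcγ]; simp, hw', hlt', ?_⟩
    intro p' m' s' a' b' c' hab' hbc' heq'
    exact key γ p' (u ++ [a]) (m ++ b :: s) m' s' a' b' c' (hw' ▸ hirr) hlt' hab' hbc'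
      (by rw [← heq', hy2, hpu, hcγ]; simp)
end

section
/- In the hypoplactic rewriting system (A, T) with T = {w → Q(w) : |w| ≤ max(2n, 4), w ≠ Q(w)}, where Q(w) is the unique quasi-ribbon word equal to w in H_n, the irreducible words are exactly the quasi-ribbon words; consequently (A, T) is a finite complete rewriting system presenting H_n. -/
/-- The defining relations of the hypoplactic monoid of rank `n`: the Knuth relations
`acb = cab` (`a ≤ b < c`), `bac = bca` (`a < b ≤ c`), together with `cadb = acbd` and
`bdac = dbca` (`a ≤ b < c ≤ d`). -/
def HypoRel (n : ℕ) (u v : List (Fin n)) : Prop :=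
  ∃ a b c d : Fin n,
    (a ≤ b ∧ b < c ∧ u = [a, c, b] ∧ v = [c, a, b]) ∨
    (a < b ∧ b ≤ c ∧ u = [b, a, c] ∧ v = [b, c, a]) ∨
    (a ≤ b ∧ b < c ∧ c ≤ d ∧ u = [c, a, d, b] ∧ v = [a, c, b, d]) ∨
    (a ≤ b ∧ b < c ∧ c ≤ d ∧ u = [b, d, a, c] ∧ v = [d, b, c, a])

/-- One application of a defining relation of the hypoplactic monoid inside a word.
The hypoplactic congruence is the equivalence relation generated by this relation. -/
def HypoStep (n : ℕ) (u v : List (Fin n)) : Prop :=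
  ∃ p s l r, HypoRel n l r ∧ u = p ++ l ++ s ∧ v = p ++ r ++ s

/-- A quasi-ribbon word: a word whose maximal-column decomposition
`α⁽¹⁾ ⋯ α⁽ᵏ⁾` (nonempty strictly decreasing factors) satisfies that the last
(smallest) letter of `α⁽ⁱ⁺¹⁾` is `≥` the first (greatest) letter of `α⁽ⁱ⁾`. -/
def QuasiRibbon (n : ℕ) (w : List (Fin n)) : Prop :=
  ∃ cols : List (List (Fin n)), w = cols.flatten ∧ (∀ c ∈ cols, c ≠ []) ∧
    (∀ c ∈ cols, List.Chain' (· > ·) c) ∧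
    List.Chain' (fun c d => ∀ x ∈ c.head?, ∀ y ∈ d.getLast?, x ≤ y) cols

/-- One step of rewriting with the system `T = {w → Q(w) : |w| ≤ max(2n,4), w ≠ Q(w)}`. -/
def HypoTStep (n : ℕ) (Q : List (Fin n) → List (Fin n)) (u v : List (Fin n)) : Prop :=
  ∃ p s m, m.length ≤ max (2 * n) 4 ∧ m ≠ Q m ∧ u = p ++ m ++ s ∧ v = p ++ Q m ++ s

namespace HypoAux
open List Relation

variable {n : ℕ}

lemma hypoRel_length {u v : List (Fin n)} (h : HypoRel n u v) : u.length = v.length := by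
  obtain ⟨a,b,c,d,h⟩ := h
  rcases h with ⟨_,_,rfl,rfl⟩|⟨_,_,rfl,rfl⟩|⟨_,_,_,rfl,rfl⟩|⟨_,_,_,rfl,rfl⟩ <;> rfl

lemma hypoRel_length_le {u v : List (Fin n)} (h : HypoRel n u v) : u.length ≤ 4 := by
  obtain ⟨a,b,c,d,h⟩ := h
  rcases h with ⟨_,_,rfl,rfl⟩|⟨_,_,rfl,rfl⟩|⟨_,_,_,rfl,rfl⟩|⟨_,_,_,rfl,rfl⟩ <;> simp

lemma hypoStep_length {u v : List (Fin n)} (h : HypoStep n u v) : u.length = v.length := by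
  obtain ⟨p,s,l,r,hr,rfl,rfl⟩ := h
  simp [hypoRel_length hr]

lemma eqv_length {u v : List (Fin n)} (h : Relation.EqvGen (HypoStep n) u v) :
    u.length = v.length := by
  induction h with
  | rel _ _ h => exact hypoStep_length h
  | refl => rfl
  | symm _ _ _ ih => omega
  | trans _ _ _ _ _ ih1 ih2 => omega

lemma hypoStep_ctx {l r : List (Fin n)} (p s : List (Fin n)) (h : HypoStep n l r) :
    HypoStep n (p ++ l ++ s) (p ++ r ++ s) := by
  obtain ⟨p',s',a,b,hr,rfl,rfl⟩ := h
  exact ⟨p ++ p', s' ++ s, a, b, hr, by simp, by simp⟩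

lemma eqv_ctx {l r : List (Fin n)} (p s : List (Fin n))
    (h : EqvGen (HypoStep n) l r) :
    EqvGen (HypoStep n) (p ++ l ++ s) (p ++ r ++ s) := by
  induction h with
  | rel _ _ h => exact .rel _ _ (hypoStep_ctx p s h)
  | refl x => exact .refl _
  | symm x y _ ih => exact .symm _ _ ih
  | trans x y z _ _ ih1 ih2 => exact .trans _ _ _ ih1 ih2

/-- in a strictly decreasing list, the last element is ≤ the head -/
lemma gt_chain_last_le_head : ∀ {c : List (Fin n)}, List.Chain' (· > ·) c →
    ∀ x ∈ c.getLast?, ∀ y ∈ c.head?, x ≤ y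
  | [], _ => by simp
  | [a], _ => by simp
  | a :: b :: t, h => by
    rw [List.Chain', List.isChain_cons_cons] at h
    intro x hx y hy
    simp only [head?_cons, Option.mem_some_iff] at hy
    subst hy
    rw [List.getLast?_cons_cons] at hx
    have := gt_chain_last_le_head h.2 x hx b (by simp)
    exact le_of_lt (lt_of_le_of_lt this h.1)

/-- in a strictly decreasing list, the last of dropLast is ≥ the last -/
lemma gt_chain_last_dropLast : ∀ {c : List (Fin n)}, List.Chain' (· > ·) c →
    ∀ x ∈ c.getLast?, ∀ y ∈ c.dropLast.getLast?, x ≤ y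
  | [], _ => by simp
  | [a], _ => by simp
  | [a, b], h => by
    rw [List.Chain', List.isChain_cons_cons] at h
    intro x hx y hy
    simp only [List.getLast?_cons_cons, List.getLast?_singleton, Option.mem_some_iff] at hx
    simp only [List.dropLast] at hy
    simp only [List.getLast?_singleton, Option.mem_some_iff] at hy
    subst hx; subst hy
    exact le_of_lt h.1
  | a :: b :: c :: t, h => by
    rw [List.Chain', List.isChain_cons_cons] at h
    intro x hx y hy
    rw [List.getLast?_cons_cons] at hx
    have hd : (a :: b :: c :: t).dropLast = a :: (b :: c :: t).dropLast := rfl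
    rw [hd] at hy
    have hne : (b :: c :: t).dropLast ≠ [] := by simp
    rw [show a :: (b :: c :: t).dropLast = [a] ++ (b :: c :: t).dropLast from rfl,
      List.getLast?_append_of_ne_nil _ hne] at hy
    exact gt_chain_last_dropLast h.2 x hx y hy

lemma col_length_le {c : List (Fin n)} (h : List.Chain' (· > ·) c) : c.length ≤ n := by
  have hp : List.Pairwise (· > ·) c := List.isChain_iff_pairwise.1 h
  have hnd : c.Nodup := hp.imp (fun h => ne_of_gt h)
  simpa using hnd.length_le_card

abbrev QRrel : List (Fin n) → List (Fin n) → Prop :=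
  fun c d => ∀ x ∈ c.head?, ∀ y ∈ d.getLast?, x ≤ y

/-- last of the flatten is ≥ last of the first column -/
lemma flatten_last_ge : ∀ (rest : List (List (Fin n))) (d : List (Fin n)),
    (∀ c ∈ d :: rest, c ≠ []) → (∀ c ∈ d :: rest, List.Chain' (· > ·) c) →
    List.Chain' QRrel (d :: rest) →
    ∀ z ∈ d.getLast?, ∀ y ∈ (d :: rest).flatten.getLast?, z ≤ y
  | [], d => by
    intro hne hdec hch z hz y hy
    simp only [List.flatten_cons, List.flatten_nil, List.append_nil] at hy
    rw [hz] at hy; exact le_of_eq (Option.some_injective _ hy)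
  | e :: rest, d => by
    intro hne hdec hch z hz y hy
    have hde : d ≠ [] := hne d (by simp)
    have hee : e ≠ [] := hne e (by simp)
    have hfl : (e :: rest).flatten ≠ [] := by
      simp only [List.flatten_cons]
      intro h
      exact hee (List.append_eq_nil_iff.1 h).1
    rw [List.flatten_cons, List.getLast?_append_of_ne_nil _ hfl] at hy
    rw [List.Chain', List.isChain_cons_cons] at hch
    obtain ⟨hd0, hdtl, hdhd⟩ := List.exists_cons_of_ne_nil hde
    have h1 : z ≤ hd0 := gt_chain_last_le_head (hdec d (by simp)) z hz hd0 (by simp [hdhd])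
    obtain ⟨elast, helast⟩ : ∃ el, e.getLast? = some el :=
      ⟨e.getLast hee, List.getLast?_eq_getLast _⟩
    have h2 : hd0 ≤ elast := hch.1 hd0 (by simp [hdhd]) elast helast
    have h3 : elast ≤ y := flatten_last_ge rest e (fun c hc => hne c (by simp [hc]))
      (fun c hc => hdec c (by simp [hc])) hch.2 elast helast y hy
    exact le_trans h1 (le_trans h2 h3)

/-- a quasi-ribbon word with at least two columns has head ≤ last -/
lemma qr_head_le_last (c d : List (Fin n)) (rest : List (List (Fin n)))
    (hne : ∀ e ∈ c :: d :: rest, e ≠ []) (hdec : ∀ e ∈ c :: d :: rest, List.Chain' (· > ·) e)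
    (hch : List.Chain' QRrel (c :: d :: rest)) :
    ∀ x ∈ (c :: d :: rest).flatten.head?, ∀ y ∈ (c :: d :: rest).flatten.getLast?, x ≤ y := by
  intro x hx y hy
  have hce : c ≠ [] := hne c (by simp)
  have hde : d ≠ [] := hne d (by simp)
  have hfl : (d :: rest).flatten ≠ [] := by
    simp only [List.flatten_cons]
    intro h
    exact hde (List.append_eq_nil_iff.1 h).1
  rw [List.flatten_cons, List.head?_append_of_ne_nil _ hce] at hx
  rw [List.flatten_cons, List.getLast?_append_of_ne_nil _ hfl] at hy
  rw [List.Chain', List.isChain_cons_cons] at hch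
  obtain ⟨dlast, hdlast⟩ : ∃ dl, d.getLast? = some dl :=
    ⟨d.getLast hde, List.getLast?_eq_getLast _⟩
  have h1 : x ≤ dlast := hch.1 x hx dlast hdlast
  have h2 : dlast ≤ y := flatten_last_ge rest d (fun e he => hne e (by simp [he]))
    (fun e he => hdec e (by simp [he])) hch.2 dlast hdlast y hy
  exact le_trans h1 h2

/-- the key non-quasi-ribbon certificate : head > last together with a non-descent -/
lemma notQR {c d : List (Fin n)} (hc : c ≠ []) (hd : d ≠ [])
    (hcc : List.Chain' (· > ·) c) (hdc : List.Chain' (· > ·) d)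
    (hnd : ∀ x ∈ c.getLast?, ∀ y ∈ d.head?, x ≤ y)
    (hbad : ∃ x ∈ c.head?, ∃ y ∈ d.getLast?, ¬ x ≤ y) :
    ¬ QuasiRibbon n (c ++ d) := by
  rintro ⟨cols, hfl, hne, hdec, hch⟩
  obtain ⟨x, hx, y, hy, hxy⟩ := hbad
  match cols with
  | [] => simp at hfl; exact hc hfl.1
  | [e] =>
    -- c ++ d is a single strictly decreasing column, but there is a non-descent
    have hch : List.Chain' (· > ·) (c ++ d) := by
      rw [show c ++ d = e by simpa using hfl]
      exact hdec e (by simp)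
    rw [List.Chain', List.isChain_append] at hch
    obtain ⟨clast, hclast⟩ : ∃ cl, c.getLast? = some cl :=
      ⟨c.getLast hc, List.getLast?_eq_getLast _⟩
    obtain ⟨dhd, hdhd⟩ : ∃ dh, d.head? = some dh :=
      ⟨d.head hd, List.head?_eq_head _⟩
    exact absurd (hnd clast hclast dhd hdhd) (not_le_of_gt (hch.2.2 clast hclast dhd hdhd))
  | e :: f :: rest =>
    have := qr_head_le_last e f rest hne hdec hch x (by
      rw [← hfl, List.head?_append_of_ne_nil _ hc]; exact hx) y (by
      rw [← hfl, List.getLast?_append_of_ne_nil _ hd]; exact hy)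
    exact hxy this

/-- peel the first maximal column off a nonempty word -/
lemma peel : ∀ (w : List (Fin n)), w ≠ [] → ∃ c r, w = c ++ r ∧ c ≠ [] ∧
    List.Chain' (· > ·) c ∧ (∀ x ∈ c.getLast?, ∀ y ∈ r.head?, x ≤ y)
  | [], h => absurd rfl h
  | [a], _ => ⟨[a], [], by simp, by simp, List.isChain_singleton _, by simp⟩
  | a :: b :: w, _ => by
    obtain ⟨c, r, heq, hcne, hcd, hbd⟩ := peel (b :: w) (by simp)
    obtain ⟨c0, ctl, rfl⟩ := List.exists_cons_of_ne_nil hcne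
    have hc0 : c0 = b := by
      have : (c0 :: ctl ++ r).head? = some b := by rw [← heq]; rfl
      simpa using this
    rcases lt_or_ge b a with hba | hab
    · refine ⟨a :: c0 :: ctl, r, by rw [show a :: b :: w = a :: (b :: w) from rfl, heq]; rfl,
        by simp, ?_, ?_⟩
      · rw [List.Chain', List.isChain_cons_cons]; exact ⟨hc0 ▸ hba, hcd⟩
      · rw [List.getLast?_cons_cons]; exact hbd
    · exact ⟨[a], b :: w, rfl, by simp, List.isChain_singleton _, by
        intro x hx y hy
        simp only [List.getLast?_singleton, Option.mem_some_iff] at hx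
        simp only [List.head?_cons, Option.mem_some_iff] at hy
        subst hx; subst hy; exact hab⟩


/-- every word is quasi-ribbon or contains a short non-quasi-ribbon factor -/
lemma mainB : ∀ (N : ℕ) (w : List (Fin n)), w.length ≤ N →
    QuasiRibbon n w ∨ ∃ p m s, w = p ++ m ++ s ∧ m.length ≤ 2 * n ∧ ¬ QuasiRibbon n m
  | 0, w => by
    intro hw
    left
    rw [List.length_eq_zero_iff.1 (Nat.le_zero.1 hw)]
    exact ⟨[], by simp, by simp, by simp, List.isChain_nil⟩
  | N + 1, w => by
    intro hw
    rcases eq_or_ne w [] with rfl | hwne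
    · exact Or.inl ⟨[], by simp, by simp, by simp, List.isChain_nil⟩
    obtain ⟨c, r, rfl, hcne, hcd, hbd⟩ := peel w hwne
    have hr : r.length ≤ N := by
      have := List.length_append (as := c) (bs := r)
      have hc1 : 1 ≤ c.length := List.length_pos_iff.2 hcne
      omega
    rcases mainB N r hr with hQR | ⟨p, m, s, rfl, hml, hmQR⟩
    · obtain ⟨cols, rfl, hne, hdec, hch⟩ := hQR
      match cols, hne, hdec, hch with
      | [], _, _, _ => exact Or.inl ⟨[c], by simp, by simpa using hcne, by simpa using hcd, List.isChain_singleton _⟩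
      | d :: rest, hne, hdec, hch =>
        have hde : d ≠ [] := hne d (by simp)
        by_cases hle : ∀ x ∈ c.head?, ∀ y ∈ d.getLast?, x ≤ y
        · left
          refine ⟨c :: d :: rest, by simp, ?_, ?_, ?_⟩
          · intro e he
            rcases List.mem_cons.1 he with rfl | he'
            · exact hcne
            · exact hne e he'
          · intro e he
            rcases List.mem_cons.1 he with rfl | he'
            · exact hcd
            · exact hdec e he'
          · rw [List.Chain', List.isChain_cons_cons]; exact ⟨hle, hch⟩
        · right
          refine ⟨[], c ++ d, rest.flatten, by simp, ?_, ?_⟩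
          · have h1 := col_length_le hcd
            have h2 := col_length_le (hdec d (by simp))
            rw [List.length_append]; omega
          · push_neg at hle
            obtain ⟨x, hx, y, hy, hxy⟩ := hle
            refine notQR hcne hde hcd (hdec d (by simp)) ?_ ⟨x, hx, y, hy, not_le_of_gt hxy⟩
            intro x' hx' y' hy'
            apply hbd x' hx'
            rw [List.flatten_cons, List.head?_append_of_ne_nil _ hde]
            exact hy'
    · exact Or.inr ⟨c ++ p, m, s, by simp, hml, hmQR⟩

/-- quasi-ribbon words are closed under removing the first letter -/
lemma QR_tail {w : List (Fin n)} (h : QuasiRibbon n w) : QuasiRibbon n w.tail := by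
  obtain ⟨cols, rfl, hne, hdec, hch⟩ := h
  match cols, hne, hdec, hch with
  | [], _, _, _ => exact ⟨[], by simp, by simp, by simp, List.isChain_nil⟩
  | c :: rest, hne, hdec, hch =>
    obtain ⟨a, ctl, rfl⟩ := List.exists_cons_of_ne_nil (hne c (by simp))
    have htl : ((a :: ctl) :: rest).flatten.tail = ctl ++ rest.flatten := by
      simp [List.flatten_cons]
    rw [htl]
    match ctl, hne, hdec, hch with
    | [], hne, hdec, hch =>
      exact ⟨rest, by simp, fun e he => hne e (by simp [he]),
        fun e he => hdec e (by simp [he]), hch.tail⟩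
    | b :: ctl', hne, hdec, hch =>
      refine ⟨(b :: ctl') :: rest, by simp, ?_, ?_, ?_⟩
      · intro e he
        rcases List.mem_cons.1 he with rfl | he'
        · simp
        · exact hne e (by simp [he'])
      · intro e he
        rcases List.mem_cons.1 he with rfl | he'
        · exact (hdec (a :: b :: ctl') (by simp)).tail
        · exact hdec e (by simp [he'])
      · match rest, hch with
        | [], _ => exact List.isChain_singleton _
        | d :: rest', hch =>
          rw [List.Chain', List.isChain_cons_cons] at hch ⊢
          refine ⟨?_, hch.2⟩
          intro x hx y hy
          simp only [List.head?_cons, Option.mem_some_iff] at hx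
          subst hx
          have hba : b < a := (List.isChain_cons_cons.1 (hdec (a :: b :: ctl') (by simp))).1
          exact le_of_lt (lt_of_lt_of_le hba (hch.1 a (by simp) y hy))

/-- quasi-ribbon words are closed under removing the last letter -/
lemma QR_dropLast {w : List (Fin n)} (h : QuasiRibbon n w) : QuasiRibbon n w.dropLast := by
  obtain ⟨cols, rfl, hne, hdec, hch⟩ := h
  revert hne hdec hch
  induction cols using List.reverseRecOn with
  | nil => intro _ _ _; exact ⟨[], by simp, by simp, by simp, List.isChain_nil⟩
  | append_singleton cs c _ =>
    intro hne hdec hch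
    have hce : c ≠ [] := hne c (by simp)
    have hdl : (cs ++ [c]).flatten.dropLast = cs.flatten ++ c.dropLast := by
      rw [List.flatten_append, List.flatten_cons, List.flatten_nil, List.append_nil,
        List.dropLast_append_of_ne_nil hce]
    rw [hdl]
    have hcsne : ∀ e ∈ cs, e ≠ [] := fun e he => hne e (by simp [he])
    have hcsdec : ∀ e ∈ cs, List.Chain' (· > ·) e := fun e he => hdec e (by simp [he])
    have hcsch : List.Chain' QRrel cs := hch.prefix ⟨[c], rfl⟩
    match hc : c.dropLast with
    | [] =>
      refine ⟨cs, by simp [hc], hcsne, hcsdec, hcsch⟩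
    | b :: ctl =>
      refine ⟨cs ++ [b :: ctl], by simp [List.flatten_append, hc], ?_, ?_, ?_⟩
      · intro e he
        rcases List.mem_append.1 he with he' | he'
        · exact hcsne e he'
        · simp only [List.mem_singleton] at he'; subst he'; simp
      · intro e he
        rcases List.mem_append.1 he with he' | he'
        · exact hcsdec e he'
        · simp only [List.mem_singleton] at he'; subst he'
          exact (hdec c (by simp)).prefix (hc ▸ List.dropLast_prefix c)
      · rw [List.Chain', List.isChain_append]
        refine ⟨hcsch, by simp, ?_⟩
        intro e he f hf
        simp only [List.head?_cons, Option.mem_some_iff] at hf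
        subst hf
        have hold : QRrel e c :=
          (List.isChain_append.1 (hch : List.Chain' QRrel (cs ++ [c]))).2.2 e he c (by simp)
        intro x hx y hy
        obtain ⟨clast, hclast⟩ : ∃ cl, c.getLast? = some cl :=
          ⟨c.getLast hce, List.getLast?_eq_getLast _⟩
        have h1 : x ≤ clast := hold x hx clast hclast
        have h2 : clast ≤ y := gt_chain_last_dropLast (hdec c (by simp)) clast hclast y
          (by rw [hc]; exact hy)
        exact le_trans h1 h2

/-- quasi-ribbon words are closed under factors -/
lemma QR_infix {m : List (Fin n)} (p s : List (Fin n))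
    (h : QuasiRibbon n (p ++ m ++ s)) : QuasiRibbon n m := by
  have h1 : ∀ p : List (Fin n), QuasiRibbon n (p ++ m ++ s) → QuasiRibbon n (m ++ s) := by
    intro p
    induction p with
    | nil => intro h; simpa using h
    | cons a p ih => intro h; exact ih (by simpa using QR_tail h)
  have h2 : ∀ s : List (Fin n), QuasiRibbon n (m ++ s) → QuasiRibbon n m := by
    intro s
    induction s using List.reverseRecOn with
    | nil => intro h; simpa using h
    | append_singleton s' x ih =>
      intro h
      rw [show m ++ (s' ++ [x]) = (m ++ s') ++ [x] by simp] at h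
      exact ih (by simpa [List.dropLast_concat] using QR_dropLast h)
  exact h2 s (h1 p h)


lemma lex_app {l' l : List (Fin n)} (h : List.Lex (· < ·) l' l) :
    ∀ s : List (Fin n), l'.length = l.length → List.Lex (· < ·) (l' ++ s) (l ++ s) := by
  induction h with
  | nil => intro s hlen; simp at hlen
  | rel h => intro s _; exact List.Lex.rel h
  | cons h ih => intro s hlen; exact List.Lex.cons (ih s (by simpa using hlen))

lemma lex_ctx (p : List (Fin n)) {l' l : List (Fin n)} (s : List (Fin n))
    (hlen : l'.length = l.length) (h : List.Lex (· < ·) l' l) :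
    List.Lex (· < ·) (p ++ l' ++ s) (p ++ l ++ s) := by
  induction p with
  | nil => simpa using lex_app h s hlen
  | cons a p ih => exact List.Lex.cons ih

noncomputable def mu (w : List (Fin n)) : ℕ :=
  {v : List (Fin n) | v.length = w.length ∧ List.Lex (· < ·) v w}.ncard

lemma mu_lt {u v : List (Fin n)} (hlen : v.length = u.length)
    (hlex : List.Lex (· < ·) v u) : mu v < mu u := by
  have hfin : {x : List (Fin n) | x.length = u.length ∧ List.Lex (· < ·) x u}.Finite :=
    (List.finite_length_eq (Fin n) u.length).subset (fun x hx => hx.1)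
  refine Set.ncard_lt_ncard ?_ hfin
  rw [Set.ssubset_def]
  constructor
  · rintro x ⟨h1, h2⟩
    exact ⟨by rw [h1, hlen], List.lex_trans (fun h1 h2 => lt_trans h1 h2) h2 hlex⟩
  · intro hsub
    have := hsub ⟨hlen, hlex⟩
    exact absurd this.2 (irrefl_of (List.Lex (· < ·)) v)

section WithQ

variable (Q : List (Fin n) → List (Fin n))

lemma tstep_eqv (hQcong : ∀ w, Relation.EqvGen (HypoStep n) w (Q w))
    {u v : List (Fin n)} (h : HypoTStep n Q u v) : EqvGen (HypoStep n) u v := by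
  obtain ⟨p, s, m, _, _, rfl, rfl⟩ := h
  exact eqv_ctx p s (hQcong m)

lemma tstep_mu (hQcong : ∀ w, Relation.EqvGen (HypoStep n) w (Q w))
    (hQlex : ∀ w, Q w = w ∨ List.Lex (· < ·) (Q w) w)
    {u v : List (Fin n)} (h : HypoTStep n Q u v) : mu v < mu u := by
  obtain ⟨p, s, m, _, hne, rfl, rfl⟩ := h
  have hlen : (Q m).length = m.length := (eqv_length (hQcong m)).symm
  have hlex : List.Lex (· < ·) (Q m) m := (hQlex m).elim (fun e => absurd e.symm hne) id
  exact mu_lt (by simp [hlen]) (lex_ctx p s hlen hlex)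

lemma tstep_Q_eq (hQrib : ∀ w, QuasiRibbon n (Q w))
    (hQcong : ∀ w, Relation.EqvGen (HypoStep n) w (Q w))
    (hQcross : ∀ w v, QuasiRibbon n v → Relation.EqvGen (HypoStep n) w v → v = Q w)
    {u v : List (Fin n)} (h : HypoTStep n Q u v) : Q v = Q u := by
  have h1 : EqvGen (HypoStep n) u v := tstep_eqv Q hQcong h
  exact hQcross u (Q v) (hQrib v) (.trans _ _ _ h1 (hQcong v))

lemma red (hQrib : ∀ w, QuasiRibbon n (Q w))
    (hQcong : ∀ w, Relation.EqvGen (HypoStep n) w (Q w))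
    (hQcross : ∀ w v, QuasiRibbon n v → Relation.EqvGen (HypoStep n) w v → v = Q w)
    (hQlex : ∀ w, Q w = w ∨ List.Lex (· < ·) (Q w) w) :
    ∀ (N : ℕ) (w : List (Fin n)), mu w ≤ N →
      Relation.ReflTransGen (HypoTStep n Q) w (Q w) := by
  intro N
  induction N using Nat.strong_induction_on with
  | _ N ih =>
    intro w hN
    by_cases hQR : QuasiRibbon n w
    · rw [← hQcross w w hQR (.refl w)]
    · obtain ⟨p, m, s, rfl, hml, hmQR⟩ := (mainB w.length w le_rfl).resolve_left hQR
      have hne : m ≠ Q m := fun e => hmQR (e ▸ hQrib m)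
      have hstep : HypoTStep n Q (p ++ m ++ s) (p ++ Q m ++ s) :=
        ⟨p, s, m, le_trans hml (le_max_left _ _), hne, rfl, rfl⟩
      have hQeq : Q (p ++ Q m ++ s) = Q (p ++ m ++ s) :=
        tstep_Q_eq Q hQrib hQcong hQcross hstep
      have hmu : mu (p ++ Q m ++ s) < mu (p ++ m ++ s) := tstep_mu Q hQcong hQlex hstep
      have hrec := ih (mu (p ++ Q m ++ s)) (lt_of_lt_of_le hmu hN) (p ++ Q m ++ s) le_rfl
      exact Relation.ReflTransGen.head hstep (hQeq ▸ hrec)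

end WithQ

end HypoAux

open HypoAux Relation

/-- The hypoplactic rewriting system `(A, T)` with rules `w → Q(w)` for
`|w| ≤ max(2n, 4)` and `w ≠ Q(w)`, where `Q(w)` is the unique quasi-ribbon word equal
to `w` in `H_n`: the rule set is finite, the irreducible words are exactly the
quasi-ribbon words, the system is noetherian and confluent, and it presents `H_n`
(its Thue congruence coincides with the hypoplactic congruence). -/
theorem hypoplactic_fcrs (n : ℕ) (Q : List (Fin n) → List (Fin n))
    (hQrib : ∀ w, QuasiRibbon n (Q w))
    (hQcong : ∀ w, Relation.EqvGen (HypoStep n) w (Q w))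
    (hQcross : ∀ w v, QuasiRibbon n v → Relation.EqvGen (HypoStep n) w v → v = Q w)
    (hQlex : ∀ w, Q w = w ∨ List.Lex (· < ·) (Q w) w) :
    Set.Finite {p : List (Fin n) × List (Fin n) |
        p.1.length ≤ max (2 * n) 4 ∧ p.1 ≠ Q p.1 ∧ p.2 = Q p.1} ∧
    (∀ w, (¬ ∃ v, HypoTStep n Q w v) ↔ QuasiRibbon n w) ∧
    (¬ ∃ f : ℕ → List (Fin n), ∀ i, HypoTStep n Q (f i) (f (i + 1))) ∧
    (∀ u u' u'', Relation.ReflTransGen (HypoTStep n Q) u u' →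
      Relation.ReflTransGen (HypoTStep n Q) u u'' →
      ∃ v, Relation.ReflTransGen (HypoTStep n Q) u' v ∧
        Relation.ReflTransGen (HypoTStep n Q) u'' v) ∧
    (∀ u v, Relation.EqvGen (HypoTStep n Q) u v ↔ Relation.EqvGen (HypoStep n) u v) := by
  have Qpres : ∀ u u', ReflTransGen (HypoTStep n Q) u u' → Q u' = Q u := by
    intro u u' h
    induction h with
    | refl => rfl
    | tail hab hbc ih => rw [tstep_Q_eq Q hQrib hQcong hQcross hbc, ih]
  refine ⟨?_, ?_, ?_, ?_, ?_⟩
  · refine Set.Finite.subset (Set.Finite.image (fun m => (m, Q m))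
      (List.finite_length_le (Fin n) (max (2 * n) 4))) ?_
    rintro ⟨a, b⟩ ⟨h1, _, h3⟩
    exact ⟨a, h1, by simp at h3; simp [h3]⟩
  · intro w
    constructor
    · intro hirr
      by_contra hnQR
      obtain ⟨p, m, s, rfl, hml, hmQR⟩ := (mainB w.length w le_rfl).resolve_left hnQR
      exact hirr ⟨p ++ Q m ++ s, p, s, m, le_trans hml (le_max_left _ _),
        fun e => hmQR (e ▸ hQrib m), rfl, rfl⟩
    · rintro hQR ⟨v, p, s, m, hlen, hne, hw, hv⟩
      exact hne (hQcross m m (QR_infix p s (hw ▸ hQR)) (.refl m))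
  · rintro ⟨f, hf⟩
    have hdec : ∀ i, mu (f (i + 1)) < mu (f i) := fun i => tstep_mu Q hQcong hQlex (hf i)
    have hbound : ∀ i, mu (f i) + i ≤ mu (f 0) := by
      intro i
      induction i with
      | zero => simp
      | succ k ihk => have := hdec k; omega
    have := hbound (mu (f 0) + 1)
    omega
  · intro u u' u'' h1 h2
    refine ⟨Q u, ?_, ?_⟩
    · rw [← Qpres u u' h1]; exact red Q hQrib hQcong hQcross hQlex (mu u') u' le_rfl
    · rw [← Qpres u u'' h2]; exact red Q hQrib hQcong hQcross hQlex (mu u'') u'' le_rfl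
  · have hstep_to_eqvT : ∀ u v, HypoStep n u v → EqvGen (HypoTStep n Q) u v := by
      intro u v h
      obtain ⟨p, s, l, r, hrel, rfl, rfl⟩ := h
      have hlr : EqvGen (HypoStep n) l r := .rel _ _ ⟨[], [], l, r, hrel, by simp, by simp⟩
      have hQlr : Q r = Q l := hQcross l (Q r) (hQrib r) (.trans _ _ _ hlr (hQcong r))
      have hll : l.length ≤ max (2 * n) 4 :=
        le_trans (hypoRel_length_le hrel) (le_max_right _ _)
      have hrl : r.length ≤ max (2 * n) 4 := by rw [← hypoRel_length hrel]; exact hll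
      by_cases h1 : l = Q l
      · by_cases h2 : r = Q r
        · have hlr' : l = r := by rw [h1, ← hQlr, ← h2]
          rw [hlr']
          exact .refl _
        · have hst : HypoTStep n Q (p ++ r ++ s) (p ++ Q r ++ s) :=
            ⟨p, s, r, hrl, fun e => h2 e, rfl, rfl⟩
          have hst' : HypoTStep n Q (p ++ r ++ s) (p ++ l ++ s) := by
            have : Q r = l := by rw [hQlr, ← h1]
            rwa [this] at hst
          exact .symm _ _ (.rel _ _ hst')
      · have hst : HypoTStep n Q (p ++ l ++ s) (p ++ Q l ++ s) :=
          ⟨p, s, l, hll, fun e => h1 e, rfl, rfl⟩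
        by_cases h2 : r = Q r
        · have hst' : HypoTStep n Q (p ++ l ++ s) (p ++ r ++ s) := by
            have : Q l = r := by rw [← hQlr, ← h2]
            rwa [this] at hst
          exact .rel _ _ hst'
        · have hst2 : HypoTStep n Q (p ++ r ++ s) (p ++ Q r ++ s) :=
            ⟨p, s, r, hrl, fun e => h2 e, rfl, rfl⟩
          have heq : (p ++ Q l ++ s : List (Fin n)) = p ++ Q r ++ s := by rw [hQlr]
          exact .trans _ _ _ (.rel _ _ hst) (heq ▸ .symm _ _ (.rel _ _ hst2))
    intro u v
    constructor
    · intro h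
      induction h with
      | rel a b hab => exact tstep_eqv Q hQcong hab
      | refl a => exact .refl _
      | symm a b _ ih => exact .symm _ _ ih
      | trans a b c _ _ ih1 ih2 => exact .trans _ _ _ ih1 ih2
    · intro h
      induction h with
      | rel a b hab => exact hstep_to_eqvT a b hab
      | refl a => exact .refl _
      | symm a b _ ih => exact .symm _ _ ih
      | trans a b c _ _ ih1 ih2 => exact .trans _ _ _ ih1 ih2
end
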